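/- Let M be a rank-r connected simple matroid with c(r-1)+1 elements (c ≥ 2) whose characteristic polynomial has only real roots. Let γᵢ denote the number of lines of M with exactly i points. Then Σ_{i≥3} C(i-1,2)·γᵢ ≥ c(c-1)(r-1)/2, with equality if and only if χ(M;λ) = (λ-1)(λ-c)^{r-1}. -/

import Mathlib

open Finset Polynomial

section MatroidDefs

variable {α : Type} [Fintype α] [DecidableEq α]

/-- The rank of a set `X` in a matroid `M`: the largest size of an independent subset
of `X`. -/
noncomputable def mrk (M : Matroid α) (X : Set α) : ℕ :=
  sSup {n | ∃ I, M.Indep I ∧ I ⊆ X ∧ I.ncard = n}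

/-- A matroid is simple if every pair of elements of the ground set is independent
(equivalently, it has no loops and no parallel pairs). -/
def mSimple (M : Matroid α) : Prop :=
  ∀ e f, e ∈ M.E → f ∈ M.E → M.Indep {e, f}

/-- The characteristic polynomial of a matroid on the ground set `α`, via the Whitney
rank expansion `χ(M;λ) = Σ_{A ⊆ E} (-1)^{|A|} λ^{r(E) - r(A)}` (which agrees with the
Möbius-function definition for loopless matroids). -/
noncomputable def charPoly (M : Matroid α) : Polynomial ℤ :=
  ∑ A : Finset α, C ((-1 : ℤ) ^ A.card) * X ^ (mrk M Set.univ - mrk M (A : Set α))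

/-- The number of lines (rank-2 flats) of `M` with exactly `k` points. -/
noncomputable def lineCount (M : Matroid α) (k : ℕ) : ℕ :=
  Nat.card {F : Set α | M.IsFlat F ∧ mrk M F = 2 ∧ F.ncard = k}

/-- Every line (rank-2 flat) of `M` has at most 3 points. -/
def linesAtMost3 (M : Matroid α) : Prop :=
  ∀ F : Set α, M.IsFlat F → mrk M F = 2 → F.ncard ≤ 3

/-- An integer polynomial has only real roots. -/
def onlyRealRoots (p : Polynomial ℤ) : Prop :=
  (p.map (Int.castRingHom ℝ)).Splits

/-- An integer polynomial has only integral roots: every complex root is an integer. -/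
def onlyIntegerRoots (p : Polynomial ℤ) : Prop :=
  ∀ z ∈ (p.map (Int.castRingHom ℂ)).roots, ∃ k : ℤ, z = (k : ℂ)

/-- A matroid is connected if no proper nonempty subset of the ground set gives an
additive separation of the rank. -/
def mConnected (M : Matroid α) : Prop :=
  M.E.Nonempty ∧ ∀ A : Set α, A ⊆ M.E → A.Nonempty → (M.E \ A).Nonempty →
    mrk M A + mrk M (M.E \ A) ≠ mrk M M.E

/-- A flat `X` of `M` is modular if every line `L` with
`rank(X ∨ L) = rank(X) + 1` meets `X`. -/
def modularFlat (M : Matroid α) (Y : Set α) : Prop :=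
  M.IsFlat Y ∧ ∀ L : Set α, M.IsFlat L → mrk M L = 2 →
    mrk M (Y ∪ L) = mrk M Y + 1 → (Y ∩ L).Nonempty

end MatroidDefs

open Set

set_option linter.unusedSectionVars false
section Rank
variable {α : Type} [Fintype α] [DecidableEq α] {M : Matroid α} {X Y F I : Set α}

lemma mrk_eq_of_basis (hE : M.E = Set.univ) (hI : M.IsBasis I X) : mrk M X = I.ncard := by
  apply IsGreatest.csSup_eq
  constructor
  · exact ⟨I, hI.indep, hI.subset, rfl⟩
  · rintro n ⟨J, hJ, hJX, rfl⟩
    obtain ⟨J', hJ', hJJ'⟩ := hJ.subset_isBasis_of_subset hJX (by rw [hE]; exact subset_univ _)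
    have h1 : J.ncard ≤ J'.ncard := Set.ncard_le_ncard hJJ' J'.toFinite
    have h2 : J'.encard = I.encard := hJ'.encard_eq_encard hI
    have h3 : J'.ncard = I.ncard := by rw [Set.ncard_def, h2, ← Set.ncard_def]
    omega

lemma mrk_exists_basis (hE : M.E = Set.univ) (X : Set α) : ∃ I, M.IsBasis I X :=
  M.exists_isBasis X (by rw [hE]; exact subset_univ _)

lemma mrk_indep (hE : M.E = Set.univ) (h : M.Indep I) : mrk M I = I.ncard :=
  mrk_eq_of_basis hE h.isBasis_self

lemma mrk_mono (hE : M.E = Set.univ) (h : X ⊆ Y) : mrk M X ≤ mrk M Y := by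
  obtain ⟨I, J, hI, hJ, hIJ⟩ := M.exists_isBasis_subset_isBasis h (by rw [hE]; exact subset_univ _)
  rw [mrk_eq_of_basis hE hI, mrk_eq_of_basis hE hJ]
  exact Set.ncard_le_ncard hIJ J.toFinite

lemma mrk_le_ncard (hE : M.E = Set.univ) (X : Set α) : mrk M X ≤ X.ncard := by
  obtain ⟨I, hI⟩ := mrk_exists_basis hE X
  rw [mrk_eq_of_basis hE hI]
  exact Set.ncard_le_ncard hI.subset X.toFinite

lemma mrk_closure (hE : M.E = Set.univ) (X : Set α) : mrk M (M.closure X) = mrk M X := by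
  obtain ⟨I, hI⟩ := mrk_exists_basis hE X
  rw [mrk_eq_of_basis hE hI, mrk_eq_of_basis hE hI.isBasis_closure_right]

lemma closure_flat' (M : Matroid α) (X : Set α) : M.IsFlat (M.closure X) := by
  refine ⟨fun I X' hI hIX' => ?_, M.closure_subset_ground X⟩
  have h1 : M.closure I = M.closure (M.closure X) := hI.closure_eq_closure
  rw [M.closure_closure] at h1
  calc X' ⊆ M.closure I := hIX'.subset_closure
    _ = M.closure X := h1

lemma mrk_empty (hE : M.E = Set.univ) : mrk M (∅ : Set α) = 0 := by
  rw [mrk_indep hE M.empty_indep, Set.ncard_empty]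

lemma flat_eq_closure (hE : M.E = Set.univ) (hF : M.IsFlat F) (hXF : X ⊆ F)
    (hrk : mrk M X = mrk M F) : F = M.closure X := by
  obtain ⟨I, hI⟩ := mrk_exists_basis hE X
  obtain ⟨J, hJ, hIJ⟩ := hI.indep.subset_isBasis_of_subset (hI.subset.trans hXF)
    (by rw [hE]; exact subset_univ _)
  have hIJcard : I.ncard = J.ncard := by
    rw [← mrk_eq_of_basis hE hI, ← mrk_eq_of_basis hE hJ, hrk]
  have hIeqJ : I = J := Set.eq_of_subset_of_ncard_le hIJ (le_of_eq hIJcard.symm) J.toFinite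
  apply subset_antisymm
  · calc F ⊆ M.closure J := hJ.subset_closure
      _ = M.closure X := by rw [← hIeqJ, hI.closure_eq_closure]
  · rw [← hF.closure]
    exact M.closure_subset_closure hXF
end Rank
section Simple
variable {α : Type} [Fintype α] [DecidableEq α] {M : Matroid α} {X : Set α}

lemma mrk_singleton (hE : M.E = Set.univ) (hs : mSimple M) (a : α) : mrk M ({a} : Set α) = 1 := by
  have h : M.Indep {a} := by
    have := hs a a (by rw [hE]; trivial) (by rw [hE]; trivial)
    simpa using this
  rw [mrk_indep hE h, Set.ncard_singleton]

lemma mrk_pair (hE : M.E = Set.univ) (hs : mSimple M) {a b : α} (hab : a ≠ b) :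
    mrk M ({a, b} : Set α) = 2 := by
  have h : M.Indep {a, b} := hs a b (by rw [hE]; trivial) (by rw [hE]; trivial)
  rw [mrk_indep hE h, Set.ncard_pair hab]

lemma one_le_mrk (hE : M.E = Set.univ) (hs : mSimple M) (hX : X.Nonempty) : 1 ≤ mrk M X := by
  obtain ⟨a, ha⟩ := hX
  have := mrk_mono (M := M) hE (Set.singleton_subset_iff.2 ha)
  rw [mrk_singleton hE hs a] at this
  exact this

lemma two_le_mrk (hE : M.E = Set.univ) (hs : mSimple M) {a b : α} (hab : a ≠ b)
    (ha : a ∈ X) (hb : b ∈ X) : 2 ≤ mrk M X := by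
  have := mrk_mono (M := M) hE (show ({a, b} : Set α) ⊆ X by
    rintro x (rfl | rfl) <;> assumption)
  rw [mrk_pair hE hs hab] at this
  exact this

lemma eq_singleton_of_mrk_eq_one (hE : M.E = Set.univ) (hs : mSimple M)
    (h : mrk M X = 1) : ∃ a, X = {a} := by
  have hne : X.Nonempty := by
    by_contra hne
    rw [Set.not_nonempty_iff_eq_empty] at hne
    subst hne
    rw [mrk_indep hE M.empty_indep, Set.ncard_empty] at h
    omega
  obtain ⟨a, ha⟩ := hne
  refine ⟨a, ?_⟩
  ext x
  constructor
  · intro hx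
    by_contra hxa
    have := two_le_mrk hE hs (show x ≠ a from hxa) hx ha
    omega
  · rintro rfl; exact ha
end Simple
section Coeff
variable {α : Type} [Fintype α] [DecidableEq α] {M : Matroid α} {r : ℕ}

lemma charPoly_coeff (M : Matroid α) (k : ℕ) :
    (charPoly M).coeff k =
      ∑ A : Finset α, if mrk M Set.univ - mrk M (A : Set α) = k then (-1 : ℤ) ^ A.card else 0 := by
  rw [charPoly, finset_sum_coeff]
  refine Finset.sum_congr rfl fun A _ => ?_
  rw [coeff_C_mul, coeff_X_pow, mul_ite, mul_one, mul_zero]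
  simp only [eq_comm]

lemma mrk_coe_le (hE : M.E = Set.univ) (hr : mrk M Set.univ = r) (A : Finset α) :
    mrk M (A : Set α) ≤ r := hr ▸ mrk_mono hE (Set.subset_univ _)

lemma charPoly_coeff_eq (hE : M.E = Set.univ) (hr : mrk M Set.univ = r) {k : ℕ} (hk : k ≤ r) :
    (charPoly M).coeff k =
      ∑ A : Finset α, if mrk M (A : Set α) = r - k then (-1 : ℤ) ^ A.card else 0 := by
  rw [charPoly_coeff]
  refine Finset.sum_congr rfl fun A _ => ?_
  have h := mrk_coe_le hE hr A
  rw [hr]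
  congr 1
  simp only [eq_iff_iff]
  omega

lemma charPoly_natDegree_le (hE : M.E = Set.univ) (hr : mrk M Set.univ = r) :
    (charPoly M).natDegree ≤ r := by
  refine (Polynomial.natDegree_sum_le _ _).trans ?_
  rw [Finset.fold_max_le]
  refine ⟨Nat.zero_le r, fun A _ => ?_⟩
  refine (Polynomial.natDegree_C_mul_le _ _).trans ?_
  rw [natDegree_X_pow, hr]
  omega

lemma charPoly_coeff_r (hE : M.E = Set.univ) (hs : mSimple M) (hr : mrk M Set.univ = r) :
    (charPoly M).coeff r = 1 := by
  rw [charPoly_coeff_eq hE hr le_rfl, Nat.sub_self]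
  have h : ∀ A : Finset α, (mrk M (A : Set α) = 0) ↔ A = ∅ := by
    intro A
    constructor
    · intro h0
      by_contra hne
      obtain ⟨a, ha⟩ := Finset.nonempty_iff_ne_empty.2 hne
      have := one_le_mrk hE hs (X := (A : Set α)) ⟨a, by simpa using ha⟩
      omega
    · rintro rfl
      simpa using mrk_empty (M := M) hE
  calc (∑ A : Finset α, if mrk M (A : Set α) = 0 then (-1 : ℤ) ^ A.card else 0)
      = ∑ A : Finset α, if A = ∅ then (-1 : ℤ) ^ A.card else 0 :=
        Finset.sum_congr rfl fun A _ => by simp only [h A]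
    _ = 1 := by rw [Finset.sum_ite_eq' Finset.univ ∅ (fun A : Finset α => (-1 : ℤ) ^ A.card)]; simp

lemma charPoly_monic (hE : M.E = Set.univ) (hs : mSimple M) (hr : mrk M Set.univ = r)
    (hr1 : 1 ≤ r) : (charPoly M).Monic ∧ (charPoly M).natDegree = r := by
  have hc := charPoly_coeff_r hE hs hr
  have hd : (charPoly M).natDegree = r := by
    refine le_antisymm (charPoly_natDegree_le hE hr) (Polynomial.le_natDegree_of_ne_zero ?_)
    rw [hc]; exact one_ne_zero
  exact ⟨by rw [Polynomial.Monic, Polynomial.leadingCoeff, hd, hc], hd⟩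

lemma charPoly_coeff_r_sub_one (hE : M.E = Set.univ) (hs : mSimple M)
    (hr : mrk M Set.univ = r) (hr1 : 1 ≤ r) :
    (charPoly M).coeff (r - 1) = -(Fintype.card α : ℤ) := by
  rw [charPoly_coeff_eq hE hr (by omega)]
  have hrr : r - (r - 1) = 1 := by omega
  rw [hrr]
  have h : ∀ A : Finset α, (mrk M (A : Set α) = 1) ↔ A.card = 1 := by
    intro A
    constructor
    · intro h1
      obtain ⟨a, ha⟩ := eq_singleton_of_mrk_eq_one hE hs h1
      have : A = {a} := Finset.coe_injective (by rw [ha]; simp)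
      rw [this, Finset.card_singleton]
    · intro h1
      obtain ⟨a, rfl⟩ := Finset.card_eq_one.1 h1
      simpa using mrk_singleton hE hs a
  calc (∑ A : Finset α, if mrk M (A : Set α) = 1 then (-1 : ℤ) ^ A.card else 0)
      = ∑ A : Finset α, if A.card = 1 then (-1 : ℤ) ^ A.card else 0 :=
        Finset.sum_congr rfl fun A _ => by simp only [h A]
    _ = ∑ A ∈ Finset.univ.filter (fun A : Finset α => A.card = 1), (-1 : ℤ) ^ A.card := by
        rw [Finset.sum_filter]
    _ = ∑ A ∈ Finset.univ.filter (fun A : Finset α => A.card = 1), (-1 : ℤ) := by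
        refine Finset.sum_congr rfl fun A hA => ?_
        rw [Finset.mem_filter] at hA
        rw [hA.2, pow_one]
    _ = -(Fintype.card α : ℤ) := by
        rw [Finset.sum_const]
        have : Finset.univ.filter (fun A : Finset α => A.card = 1) =
            Finset.powersetCard 1 Finset.univ := by
          ext A; simp [Finset.mem_powersetCard_univ]
        rw [this, Finset.card_powersetCard, Finset.card_univ, Nat.choose_one_right]
        simp [mul_comm]

end Coeff

section Lines
variable {α : Type} [Fintype α] [DecidableEq α] {M : Matroid α} {r : ℕ}

open scoped Classical in
noncomputable def Lns (M : Matroid α) : Finset (Finset α) :=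
  Finset.univ.filter (fun L : Finset α => M.IsFlat ↑L ∧ mrk M (↑L : Set α) = 2)

lemma mem_Lns {L : Finset α} : L ∈ Lns M ↔ M.IsFlat ↑L ∧ mrk M (↑L : Set α) = 2 := by
  simp [Lns]

lemma two_le_card_of_mem_Lns (hE : M.E = Set.univ) {L : Finset α} (hL : L ∈ Lns M) :
    2 ≤ L.card := by
  have h := (mem_Lns.1 hL).2
  have := mrk_le_ncard (M := M) hE (↑L : Set α)
  rw [h, Set.ncard_coe_finset] at this
  exact this

open scoped Classical in
lemma closure_toFinset_mem_Lns (hE : M.E = Set.univ) {A : Finset α}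
    (hA : mrk M (↑A : Set α) = 2) : (M.closure ↑A).toFinset ∈ Lns M := by
  rw [mem_Lns, Set.coe_toFinset]
  exact ⟨closure_flat' M _, by rw [mrk_closure hE, hA]⟩

open scoped Classical in
lemma fiber_eq (hE : M.E = Set.univ) (hs : mSimple M) {L : Finset α} (hL : L ∈ Lns M) :
    (Finset.univ.filter (fun A : Finset α => mrk M (↑A : Set α) = 2)).filter
        (fun A : Finset α => (M.closure (↑A : Set α)).toFinset = L) =
      (L.powerset).filter (fun A => 2 ≤ A.card) := by
  obtain ⟨hLflat, hLrk⟩ := mem_Lns.1 hL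
  ext A
  constructor
  · intro h
    obtain ⟨h1, hcl⟩ := Finset.mem_filter.1 h
    have h2 := (Finset.mem_filter.1 h1).2
    refine Finset.mem_filter.2 ⟨Finset.mem_powerset.2 ?_, ?_⟩
    have hclset : M.closure ↑A = ↑L := by
      rw [← hcl, Set.coe_toFinset]
    have hsub : (↑A : Set α) ⊆ ↑L := by
      rw [← hclset]
      exact M.subset_closure _ (by rw [hE]; exact Set.subset_univ _)
    · exact_mod_cast hsub
    · have := mrk_le_ncard (M := M) hE (↑A : Set α)
      rw [h2, Set.ncard_coe_finset] at this
      exact this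
  · intro h
    obtain ⟨hALm, hcard⟩ := Finset.mem_filter.1 h
    have hAL := Finset.mem_powerset.1 hALm
    have hsub : (↑A : Set α) ⊆ ↑L := by exact_mod_cast hAL
    have h2 : mrk M (↑A : Set α) = 2 := by
      have hle : mrk M (↑A : Set α) ≤ 2 := hLrk ▸ mrk_mono hE hsub
      obtain ⟨a, ha, b, hb, hab⟩ := Finset.one_lt_card.1 (by omega : 1 < A.card)
      have hge := two_le_mrk (M := M) (X := (↑A : Set α)) hE hs hab
        (by simpa using ha) (by simpa using hb)
      omega
    refine Finset.mem_filter.2 ⟨Finset.mem_filter.2 ⟨Finset.mem_univ _, h2⟩, ?_⟩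
    have := flat_eq_closure hE hLflat hsub (by rw [h2, hLrk])
    rw [← this]
    ext x
    simp

lemma sum_neg_one_pow_powerset_ge_two {L : Finset α} (hL : 2 ≤ L.card) :
    ∑ A ∈ (L.powerset).filter (fun A => 2 ≤ A.card), (-1 : ℤ) ^ A.card
      = (L.card : ℤ) - 1 := by
  have hLne : L.Nonempty := Finset.card_pos.1 (by omega)
  have htot : ∑ A ∈ L.powerset, (-1 : ℤ) ^ A.card = 0 :=
    Finset.sum_powerset_neg_one_pow_card_of_nonempty hLne
  have hsplit := Finset.sum_filter_add_sum_filter_not L.powerset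
    (fun A => 2 ≤ A.card) (fun A => (-1 : ℤ) ^ A.card)
  have hsmall : (L.powerset).filter (fun A => ¬ 2 ≤ A.card) =
      insert ∅ (L.image fun a => {a}) := by
    ext A
    simp only [Finset.mem_filter, Finset.mem_powerset, Finset.mem_insert, Finset.mem_image,
      not_le]
    constructor
    · rintro ⟨hAL, hcard⟩
      rcases A.eq_empty_or_nonempty with rfl | ⟨a, ha⟩
      · exact Or.inl rfl
      · refine Or.inr ⟨a, hAL ha, ?_⟩
        have : A = {a} := by
          apply Finset.eq_singleton_iff_unique_mem.2
          refine ⟨ha, fun b hb => ?_⟩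
          by_contra hba
          have := Finset.one_lt_card.2 ⟨a, ha, b, hb, fun h => hba h.symm⟩
          omega
        exact this.symm
    · rintro (rfl | ⟨a, haL, rfl⟩)
      · simp
      · simp [Finset.singleton_subset_iff.2 haL]
  have hsum_small : ∑ A ∈ (L.powerset).filter (fun A => ¬ 2 ≤ A.card),
      (-1 : ℤ) ^ A.card = 1 - (L.card : ℤ) := by
    rw [hsmall, Finset.sum_insert (by
      simp only [Finset.mem_image, not_exists]
      rintro a ⟨_, h⟩
      exact Finset.singleton_ne_empty a h)]
    rw [Finset.sum_image (fun a _ b _ h => Finset.singleton_injective h)]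
    simp only [Finset.card_empty, pow_zero, Finset.card_singleton, pow_one,
      Finset.sum_const, nsmul_eq_mul, mul_neg_one]
    ring
  omega

open scoped Classical in
lemma sum_rank_two (hE : M.E = Set.univ) (hs : mSimple M) :
    (∑ A : Finset α, if mrk M (↑A : Set α) = 2 then (-1 : ℤ) ^ A.card else 0)
      = ∑ L ∈ Lns M, ((L.card : ℤ) - 1) := by
  rw [← Finset.sum_filter]
  rw [← Finset.sum_fiberwise_of_maps_to (g := fun A : Finset α => (M.closure ↑A).toFinset)
    (t := Lns M) (fun A hA => closure_toFinset_mem_Lns hE (Finset.mem_filter.1 hA).2)]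
  refine Finset.sum_congr rfl fun L hL => ?_
  rw [fiber_eq hE hs hL]
  exact sum_neg_one_pow_powerset_ge_two (two_le_card_of_mem_Lns hE hL)

end Lines

section Count
variable {α : Type} [Fintype α] [DecidableEq α] {M : Matroid α} {r : ℕ}

open scoped Classical in
lemma fiber_eq2 (hE : M.E = Set.univ) (hs : mSimple M) {L : Finset α} (hL : L ∈ Lns M) :
    (Finset.powersetCard 2 (Finset.univ : Finset α)).filter
        (fun p : Finset α => (M.closure (↑p : Set α)).toFinset = L) =
      Finset.powersetCard 2 L := by
  obtain ⟨hLflat, hLrk⟩ := mem_Lns.1 hL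
  ext p
  rw [Finset.mem_filter, Finset.mem_powersetCard_univ, Finset.mem_powersetCard]
  constructor
  · rintro ⟨hcard, hcl⟩
    have hclset : M.closure ↑p = ↑L := by rw [← hcl, Set.coe_toFinset]
    have hsub : (↑p : Set α) ⊆ ↑L := by
      rw [← hclset]
      exact M.subset_closure _ (by rw [hE]; exact Set.subset_univ _)
    exact ⟨by exact_mod_cast hsub, hcard⟩
  · rintro ⟨hpL, hcard⟩
    have hsub : (↑p : Set α) ⊆ ↑L := by exact_mod_cast hpL
    obtain ⟨a, b, hab, rfl⟩ := Finset.card_eq_two.1 hcard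
    have hco : ((({a, b} : Finset α) : Set α)) = ({a, b} : Set α) := by simp
    have h2 : mrk M ((({a, b} : Finset α) : Set α)) = 2 := by
      rw [hco]; exact mrk_pair hE hs hab
    refine ⟨hcard, ?_⟩
    have := flat_eq_closure hE hLflat hsub (by rw [h2, hLrk])
    rw [← this]
    ext x
    simp

open scoped Classical in
lemma pairs_eq (hE : M.E = Set.univ) (hs : mSimple M) :
    (Fintype.card α).choose 2 = ∑ L ∈ Lns M, (L.card).choose 2 := by
  have key : ∀ p ∈ Finset.powersetCard 2 (Finset.univ : Finset α),
      (M.closure (↑p : Set α)).toFinset ∈ Lns M := by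
    intro p hp
    rw [Finset.mem_powersetCard_univ] at hp
    obtain ⟨a, b, hab, rfl⟩ := Finset.card_eq_two.1 hp
    apply closure_toFinset_mem_Lns hE
    have hco : ((({a, b} : Finset α) : Set α)) = ({a, b} : Set α) := by simp
    rw [hco]; exact mrk_pair hE hs hab
  calc (Fintype.card α).choose 2
      = (Finset.powersetCard 2 (Finset.univ : Finset α)).card := by
        rw [Finset.card_powersetCard, Finset.card_univ]
    _ = ∑ p ∈ Finset.powersetCard 2 (Finset.univ : Finset α), 1 := by
        rw [Finset.card_eq_sum_ones]
    _ = ∑ L ∈ Lns M, ∑ p ∈ (Finset.powersetCard 2 (Finset.univ : Finset α)).filter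
          (fun p : Finset α => (M.closure (↑p : Set α)).toFinset = L), 1 :=
        (Finset.sum_fiberwise_of_maps_to key _).symm
    _ = ∑ L ∈ Lns M, (L.card).choose 2 := by
        refine Finset.sum_congr rfl fun L hL => ?_
        rw [fiber_eq2 hE hs hL, ← Finset.card_eq_sum_ones, Finset.card_powersetCard]

open scoped Classical in
lemma lineCount_eq (M : Matroid α) (k : ℕ) :
    lineCount M k = ((Lns M).filter (fun L => L.card = k)).card := by
  rw [lineCount, Nat.card_coe_set_eq]
  have himg : {F : Set α | M.IsFlat F ∧ mrk M F = 2 ∧ F.ncard = k} =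
      (fun L : Finset α => (L : Set α)) ''
        ↑((Lns M).filter (fun L => L.card = k)) := by
    ext F
    simp only [Set.mem_setOf_eq, Set.mem_image, Finset.coe_filter, Finset.mem_coe,
      Finset.mem_filter]
    constructor
    · rintro ⟨hF, h2, hk⟩
      refine ⟨F.toFinset, ⟨?_, ?_⟩, by simp⟩
      · rw [mem_Lns, Set.coe_toFinset]; exact ⟨hF, h2⟩
      · rw [← Set.ncard_eq_toFinset_card', hk]
    · rintro ⟨L, ⟨hL, hk⟩, rfl⟩
      obtain ⟨hF, h2⟩ := mem_Lns.1 hL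
      exact ⟨hF, h2, by rw [Set.ncard_coe_finset, hk]⟩
  rw [himg, Set.ncard_image_of_injective _ Finset.coe_injective, Set.ncard_coe_finset]

open scoped Classical in
lemma sum_lineCount (hE : M.E = Set.univ) :
    ∑ i ∈ Finset.Icc 3 (Fintype.card α), (i - 1).choose 2 * lineCount M i
      = ∑ L ∈ Lns M, (L.card - 1).choose 2 := by
  have key : ∀ L ∈ Lns M, L.card ∈ Finset.Icc 0 (Fintype.card α) := by
    intro L _
    rw [Finset.mem_Icc]
    exact ⟨Nat.zero_le _, Finset.card_le_univ L⟩
  rw [← Finset.sum_fiberwise_of_maps_to key (fun L => (L.card - 1).choose 2)]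
  have hzero : ∀ i ∈ Finset.Icc 0 (Fintype.card α), i ∉ Finset.Icc 3 (Fintype.card α) →
      (∑ L ∈ (Lns M).filter (fun L => L.card = i), (L.card - 1).choose 2) = 0 := by
    intro i hi hni
    have hi2 : i < 3 := by
      rw [Finset.mem_Icc] at hi
      by_contra h
      exact hni (Finset.mem_Icc.2 ⟨by omega, hi.2⟩)
    have hterm : ∀ L ∈ (Lns M).filter (fun L => L.card = i), (L.card - 1).choose 2 = 0 := by
      intro L hL
      rw [(Finset.mem_filter.1 hL).2]
      exact Nat.choose_eq_zero_of_lt (by omega)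
    rw [Finset.sum_congr rfl hterm, Finset.sum_const, smul_eq_mul, mul_zero]
  rw [← Finset.sum_subset (Finset.Icc_subset_Icc (by omega) le_rfl) hzero]
  refine Finset.sum_congr rfl fun i _ => ?_
  rw [lineCount_eq]
  calc (i - 1).choose 2 * ((Lns M).filter (fun L => L.card = i)).card
      = ∑ L ∈ (Lns M).filter (fun L => L.card = i), (i - 1).choose 2 := by
        rw [Finset.sum_const, smul_eq_mul, mul_comm]
    _ = ∑ L ∈ (Lns M).filter (fun L => L.card = i), (L.card - 1).choose 2 := by
        refine Finset.sum_congr rfl fun L hL => ?_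
        rw [(Finset.mem_filter.1 hL).2]

lemma choose_two_succ {m : ℕ} (hm : 1 ≤ m) : m.choose 2 = (m - 1).choose 2 + (m - 1) := by
  rcases m with _ | k
  · omega
  · simp [Nat.choose_succ_succ, Nat.choose_one_right, Nat.add_comm]

open scoped Classical in
lemma charPoly_coeff_r_sub_two (hE : M.E = Set.univ) (hs : mSimple M)
    (hr : mrk M Set.univ = r) (hr2 : 2 ≤ r) :
    (charPoly M).coeff (r - 2) = ((Fintype.card α).choose 2 : ℤ)
      - (∑ i ∈ Finset.Icc 3 (Fintype.card α), (i - 1).choose 2 * lineCount M i : ℕ) := by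
  rw [charPoly_coeff_eq hE hr (by omega)]
  have hrr : r - (r - 2) = 2 := by omega
  rw [hrr, sum_rank_two hE hs, sum_lineCount hE, pairs_eq hE hs]
  rw [Nat.cast_sum, Nat.cast_sum, ← Finset.sum_sub_distrib]
  refine Finset.sum_congr rfl fun L hL => ?_
  have h2 := two_le_card_of_mem_Lns hE hL
  have := choose_two_succ (m := L.card) (by omega)
  have hcast : ((L.card - 1 : ℕ) : ℤ) = (L.card : ℤ) - 1 := by
    push_cast [Nat.cast_sub (by omega : 1 ≤ L.card)]
    ring
  omega

end Count

section Analytic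

lemma esymm_one' (s : Multiset ℝ) : s.esymm 1 = s.sum := by
  rw [Multiset.esymm, Multiset.powersetCard_one, Multiset.map_map]
  simp [Function.comp]

lemma esymm_two_cons (a : ℝ) (s : Multiset ℝ) :
    (a ::ₘ s).esymm 2 = a * s.sum + s.esymm 2 := by
  simp only [Multiset.esymm, Multiset.powersetCard_cons, Multiset.map_add, Multiset.sum_add,
    Multiset.map_map, Multiset.powersetCard_one, Function.comp_def, Multiset.prod_cons,
    Multiset.prod_singleton]
  have h2 : (Multiset.map (fun x : ℝ => a * x) s).sum = a * s.sum := by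
    have := Multiset.sum_map_mul_left (s := s) (a := a) (f := fun x : ℝ => x)
    simpa using this
  rw [h2]
  have h1 : (Multiset.map (fun x : Multiset ℝ => x.prod) (Multiset.powersetCard (1 + 1) s)).sum
      = (Multiset.map Multiset.prod (Multiset.powersetCard 2 s)).sum := rfl
  rw [h1]
  ring

lemma sq_sum_eq (s : Multiset ℝ) :
    s.sum ^ 2 = (s.map (fun x => x ^ 2)).sum + 2 * s.esymm 2 := by
  induction s using Multiset.induction_on with
  | empty => simp [Multiset.esymm, Multiset.powersetCard_zero_right 1]
  | cons a s ih =>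
    rw [Multiset.sum_cons, Multiset.map_cons, Multiset.sum_cons, esymm_two_cons]
    nlinarith [ih]

lemma sum_sq_sub (c : ℝ) (s : Multiset ℝ) :
    (s.map (fun x => (x - c) ^ 2)).sum
      = (s.map (fun x => x ^ 2)).sum - 2 * c * s.sum + (Multiset.card s : ℝ) * c ^ 2 := by
  induction s using Multiset.induction_on with
  | empty => simp
  | cons a s ih =>
    simp only [Multiset.map_cons, Multiset.sum_cons, Multiset.card_cons]
    rw [ih]
    push_cast
    ring

lemma real_side {p : Polynomial ℤ} {r n S c : ℕ}
    (hmon : p.Monic) (hdeg : p.natDegree = r) (hr2 : 2 ≤ r)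
    (hsplit : (p.map (Int.castRingHom ℝ)).Splits)
    (heval : p.eval 1 = 0)
    (hn : n = c * (r - 1) + 1) (hc : 2 ≤ c)
    (hcoeff1 : p.coeff (r - 1) = -(n : ℤ))
    (hcoeff2 : (2 : ℤ) * p.coeff (r - 2) = (n : ℤ) * ((n : ℤ) - 1) - 2 * (S : ℤ)) :
    c * (c - 1) * (r - 1) ≤ 2 * S ∧
      (c * (c - 1) * (r - 1) = 2 * S ↔ p = (X - C 1) * (X - C (c : ℤ)) ^ (r - 1)) := by
  set P := p.map (Int.castRingHom ℝ) with hP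
  have hPmon : P.Monic := hmon.map (Int.castRingHom ℝ)
  have hPdeg : P.natDegree = r := by rw [hP, hmon.natDegree_map, hdeg]
  have hPne : P ≠ 0 := hPmon.ne_zero
  have hroots_card : Multiset.card P.roots = r := by
    rw [(Polynomial.splits_iff_card_roots).1 hsplit, hPdeg]
  have hP1 : P.eval 1 = 0 := by
    rw [hP, Polynomial.eval_map, Polynomial.eval₂_at_one, heval, map_zero]
  have h1mem : (1 : ℝ) ∈ P.roots := (Polynomial.mem_roots hPne).2 hP1
  set t : Multiset ℝ := P.roots.erase 1 with ht
  have hcons : P.roots = 1 ::ₘ t := (Multiset.cons_erase h1mem).symm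
  have ht_card : Multiset.card t = r - 1 := by
    rw [ht, Multiset.card_erase_of_mem h1mem, hroots_card]
    rfl
  -- coefficient identities
  have hc1 : P.coeff (r - 1) = -(n : ℝ) := by
    rw [hP, Polynomial.coeff_map, hcoeff1]
    simp
  have hc2 : (2 : ℝ) * P.coeff (r - 2) = (n : ℝ) * ((n : ℝ) - 1) - 2 * (S : ℝ) := by
    rw [hP, Polynomial.coeff_map, Int.coe_castRingHom]
    beta_reduce
    exact_mod_cast hcoeff2
  have hes1 : P.roots.esymm 1 = (n : ℝ) := by
    have hrc' : Multiset.card P.roots = P.natDegree := by rw [hPdeg]; exact hroots_card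
    have h := Polynomial.coeff_eq_esymm_roots_of_card hrc'
      (k := r - 1) (by rw [hPdeg]; omega)
    rw [hPdeg, hPmon.leadingCoeff, hc1] at h
    have hrr : r - (r - 1) = 1 := by omega
    rw [hrr] at h
    simp only [one_mul, pow_one] at h
    linarith [h]
  have hes2 : 2 * P.roots.esymm 2 = (n : ℝ) * ((n : ℝ) - 1) - 2 * (S : ℝ) := by
    have hrc' : Multiset.card P.roots = P.natDegree := by rw [hPdeg]; exact hroots_card
    have h := Polynomial.coeff_eq_esymm_roots_of_card hrc'
      (k := r - 2) (by rw [hPdeg]; omega)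
    rw [hPdeg, hPmon.leadingCoeff, one_mul] at h
    have hrr : r - (r - 2) = 2 := by omega
    rw [hrr] at h
    rw [← hc2, h]
    ring
  have hsum_roots : P.roots.sum = (n : ℝ) := by rw [← esymm_one' P.roots, hes1]
  have htsum : t.sum = (c : ℝ) * ((r - 1 : ℕ) : ℝ) := by
    have h1 : P.roots.sum = 1 + t.sum := by rw [hcons, Multiset.sum_cons]
    have h2 : (n : ℝ) = (c : ℝ) * ((r - 1 : ℕ) : ℝ) + 1 := by
      rw [hn]; push_cast; ring
    rw [hsum_roots] at h1
    linarith
  have hsq : (P.roots.map (fun x : ℝ => x ^ 2)).sum = 1 + (t.map (fun x : ℝ => x ^ 2)).sum := by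
    rw [hcons, Multiset.map_cons, Multiset.sum_cons, one_pow]
  have htsq : (t.map (fun x : ℝ => x ^ 2)).sum = ((n : ℝ) - 1) + 2 * (S : ℝ) := by
    have h := sq_sum_eq P.roots
    rw [hsum_roots, hsq] at h
    nlinarith [h, hes2]
  set R1 := ((r - 1 : ℕ) : ℝ) with hR1
  have hdiff : (t.map (fun x : ℝ => (x - (c : ℝ)) ^ 2)).sum
      = (t.map (fun x : ℝ => x ^ 2)).sum - (c : ℝ) ^ 2 * R1 := by
    rw [sum_sq_sub, ht_card, htsum, ← hR1]
    ring
  have hnonneg : 0 ≤ (t.map (fun x : ℝ => (x - (c : ℝ)) ^ 2)).sum := by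
    apply Multiset.sum_nonneg
    intro x hx
    obtain ⟨y, _, rfl⟩ := Multiset.mem_map.1 hx
    positivity
  have hn1 : (n : ℝ) - 1 = (c : ℝ) * R1 := by rw [hn]; push_cast; ring
  have hexp : (c : ℝ) * ((c : ℝ) - 1) * R1 = (c : ℝ) ^ 2 * R1 - (c : ℝ) * R1 := by ring
  -- main inequality in ℝ : 2S ≥ c(c-1)R1
  have hineqR : (c : ℝ) * ((c : ℝ) - 1) * R1 ≤ 2 * (S : ℝ) := by
    linarith [hnonneg, hdiff, htsq, hn1, hexp]
  have hcastckey : ((c * (c - 1) * (r - 1) : ℕ) : ℝ) = (c : ℝ) * ((c : ℝ) - 1) * R1 := by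
    push_cast [Nat.cast_sub (by omega : 1 ≤ c)]
    ring
  constructor
  · have : ((c * (c - 1) * (r - 1) : ℕ) : ℝ) ≤ ((2 * S : ℕ) : ℝ) := by
      rw [hcastckey]; push_cast; linarith
    exact_mod_cast this
  constructor
  · -- equality → polynomial identity
    intro heq
    have heqR : (c : ℝ) * ((c : ℝ) - 1) * R1 = 2 * (S : ℝ) := by
      rw [← hcastckey, heq]; push_cast; ring
    have hzero : (t.map (fun x : ℝ => (x - (c : ℝ)) ^ 2)).sum = 0 := by
      linarith [hdiff, htsq, hn1, hexp, heqR]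
    have hall : ∀ x ∈ t, x = (c : ℝ) := by
      intro x hx
      have hterm : (x - (c : ℝ)) ^ 2 = 0 := by
        have hle : (x - (c : ℝ)) ^ 2 ≤ (t.map (fun x : ℝ => (x - (c : ℝ)) ^ 2)).sum := by
          have hxm : ((x - (c : ℝ)) ^ 2) ∈ t.map (fun x : ℝ => (x - (c : ℝ)) ^ 2) :=
            Multiset.mem_map_of_mem _ hx
          rw [← Multiset.cons_erase hxm, Multiset.sum_cons]
          have : 0 ≤ ((t.map (fun x : ℝ => (x - (c : ℝ)) ^ 2)).erase ((x - c) ^ 2)).sum := by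
            apply Multiset.sum_nonneg
            intro z hz
            have hz' : z ∈ t.map (fun x : ℝ => (x - (c : ℝ)) ^ 2) :=
              Multiset.mem_of_mem_erase hz
            obtain ⟨y, _, rfl⟩ := Multiset.mem_map.1 hz'
            positivity
          linarith
        have := sq_nonneg (x - (c : ℝ))
        linarith [hle, hzero]
      have := pow_eq_zero_iff (n := 2) (by omega) |>.1 hterm
      linarith [sub_eq_zero.1 this]
    have hrep : t = Multiset.replicate (r - 1) (c : ℝ) :=
      Multiset.eq_replicate.2 ⟨ht_card, hall⟩
    have hPfact : P = (X - C 1) * (X - C (c : ℝ)) ^ (r - 1) := by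
      have h := hsplit.eq_prod_roots_of_monic hPmon
      rw [hcons, hrep] at h
      rw [h, Multiset.map_cons, Multiset.prod_cons, Multiset.map_replicate,
        Multiset.prod_replicate]
    apply Polynomial.map_injective (Int.castRingHom ℝ) Int.cast_injective
    rw [Polynomial.map_mul, Polynomial.map_pow, Polynomial.map_sub, Polynomial.map_sub,
      Polynomial.map_X, Polynomial.map_C, Polynomial.map_C, ← hP, hPfact]
    norm_num
  · -- polynomial identity → equality
    intro hpoly
    have hPfact : P = ((1 ::ₘ Multiset.replicate (r - 1) (c : ℝ)).map
        (fun a => X - C a)).prod := by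
      rw [hP, hpoly, Polynomial.map_mul, Polynomial.map_pow, Polynomial.map_sub,
        Polynomial.map_sub, Polynomial.map_X, Polynomial.map_C, Polynomial.map_C,
        Multiset.map_cons, Multiset.prod_cons, Multiset.map_replicate,
        Multiset.prod_replicate]
      norm_num
    have hroots : P.roots = 1 ::ₘ Multiset.replicate (r - 1) (c : ℝ) := by
      rw [hPfact, Polynomial.roots_multiset_prod_X_sub_C]
    have htrep : t = Multiset.replicate (r - 1) (c : ℝ) := by
      rw [ht, hroots, Multiset.erase_cons_head]
    have htsqval : (t.map (fun x : ℝ => x ^ 2)).sum = (c : ℝ) ^ 2 * R1 := by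
      rw [htrep, Multiset.map_replicate, Multiset.sum_replicate, hR1]
      push_cast
      ring
    have : ((c * (c - 1) * (r - 1) : ℕ) : ℝ) = ((2 * S : ℕ) : ℝ) := by
      rw [hcastckey]
      push_cast
      linarith [htsq, htsqval, hn1, hexp]
    exact_mod_cast this

end Analytic

section Glue
variable {α : Type} [Fintype α] [DecidableEq α] {M : Matroid α} {r : ℕ}

lemma charPoly_eval_one (M : Matroid α) (hne : (Finset.univ : Finset α).Nonempty) :
    (charPoly M).eval 1 = 0 := by
  rw [charPoly, Polynomial.eval_finset_sum]
  simp only [Polynomial.eval_mul, Polynomial.eval_C, Polynomial.eval_pow, Polynomial.eval_X,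
    one_pow, mul_one]
  have h := Finset.sum_powerset_neg_one_pow_card (x := (Finset.univ : Finset α)) (α := α)
  rw [Finset.powerset_univ] at h
  rw [h]
  simp [Finset.nonempty_iff_ne_empty.1 hne]

lemma charPoly_card_one (hE : M.E = Set.univ) (hs : mSimple M)
    (hr1 : mrk M Set.univ = 1) (h1 : Fintype.card α = 1) :
    charPoly M = X - C 1 := by
  obtain ⟨a, ha⟩ := Fintype.card_eq_one_iff.1 h1
  have huniv : (Finset.univ : Finset α) = {a} := by
    ext x; simp [ha x]
  have hU : (Finset.univ : Finset (Finset α)) = {∅, {a}} := by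
    ext A
    simp only [Finset.mem_univ, true_iff, Finset.mem_insert, Finset.mem_singleton]
    have : A ⊆ {a} := huniv ▸ A.subset_univ
    rcases Finset.subset_singleton_iff.1 this with h | h
    · exact Or.inl h
    · exact Or.inr h
  rw [charPoly, hU, Finset.sum_pair (by exact fun h => Finset.singleton_ne_empty a h.symm : (∅ : Finset α) ≠ {a})]
  have h0 : mrk M ((∅ : Finset α) : Set α) = 0 := by
    rw [Finset.coe_empty]; exact mrk_empty hE
  have h1' : mrk M (({a} : Finset α) : Set α) = 1 := by
    rw [Finset.coe_singleton]; exact mrk_singleton hE hs a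
  rw [h0, h1', hr1]
  simp [Polynomial.C_neg]
  ring

lemma two_mul_choose_two (n : ℕ) : n.choose 2 * 2 = n * (n - 1) := by
  rcases n with _ | m
  · simp
  · rw [Nat.choose_two_right, Nat.succ_sub_one]
    have heven : 2 ∣ (m + 1) * m := by
      rcases Nat.even_or_odd m with he | ho
      · exact Dvd.dvd.mul_left he.two_dvd _
      · have : Even (m + 1) := Odd.add_one ho
        exact Dvd.dvd.mul_right this.two_dvd _
    rw [Nat.div_mul_cancel heven]

end Glue


/-- Let `M` be a rank-`r` connected simple matroid with `c(r-1) + 1`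
elements (`c ≥ 2`) whose characteristic polynomial has only real roots, and let `γᵢ`
denote the number of lines of `M` with exactly `i` points.  Then
`Σ_{i≥3} C(i-1,2)⬝γᵢ ≥ c(c-1)(r-1)/2` (stated multiplied by 2 to stay in the integers),
with equality if and only if `χ(M;λ) = (λ-1)(λ-c)^{r-1}`. -/
theorem stmt14 {α : Type} [Fintype α] [DecidableEq α] (M : Matroid α)
    (hE : M.E = Set.univ) (hsimple : mSimple M) (hconn : mConnected M)
    (r c : ℕ) (hc : 2 ≤ c) (hr : mrk M Set.univ = r)
    (hcard : Fintype.card α = c * (r - 1) + 1)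
    (hreal : onlyRealRoots (charPoly M)) :
    c * (c - 1) * (r - 1) ≤
      2 * ∑ i ∈ Finset.Icc 3 (Fintype.card α), (i - 1).choose 2 * lineCount M i ∧
    (c * (c - 1) * (r - 1) =
        2 * ∑ i ∈ Finset.Icc 3 (Fintype.card α), (i - 1).choose 2 * lineCount M i ↔
      charPoly M = (X - C 1) * (X - C (c : ℤ)) ^ (r - 1)) := by
  classical
  haveI hα : Nonempty α := by
    have : 0 < Fintype.card α := by omega
    exact Fintype.card_pos_iff.1 this
  have hr1 : 1 ≤ r := by
    rcases Nat.eq_zero_or_pos r with h0 | h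
    · exfalso
      have hne : (Set.univ : Set α).Nonempty := Set.univ_nonempty
      have := one_le_mrk hE hsimple hne
      omega
    · exact h
  rcases eq_or_lt_of_le hr1 with hreq | hr2
  · -- r = 1
    have hr1' : r = 1 := hreq.symm
    subst hr1'
    have hcard1 : Fintype.card α = 1 := by simpa using hcard
    have hcp : charPoly M = X - C 1 := charPoly_card_one hE hsimple hr hcard1
    have hIcc : Finset.Icc 3 (Fintype.card α) = ∅ := Finset.Icc_eq_empty (by omega)
    rw [hIcc]
    simp only [Finset.sum_empty, mul_zero, Nat.sub_self, pow_zero, mul_one]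
    exact ⟨by simp, iff_of_true (by simp) (by rw [hcp])⟩
  · -- 2 ≤ r
    obtain ⟨hmon, hdeg⟩ := charPoly_monic hE hsimple hr (by omega)
    have heval := charPoly_eval_one M Finset.univ_nonempty
    have hco1 := charPoly_coeff_r_sub_one hE hsimple hr (by omega)
    have hco2 := charPoly_coeff_r_sub_two hE hsimple hr hr2
    have hn1 : 1 ≤ Fintype.card α := by omega
    have hch : ((Fintype.card α).choose 2 : ℤ) * 2
        = (Fintype.card α : ℤ) * ((Fintype.card α : ℤ) - 1) := by
      have h := two_mul_choose_two (Fintype.card α)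
      zify [hn1] at h
      exact h
    have hcoeff2 : (2 : ℤ) * (charPoly M).coeff (r - 2)
        = (Fintype.card α : ℤ) * ((Fintype.card α : ℤ) - 1)
          - 2 * ((∑ i ∈ Finset.Icc 3 (Fintype.card α),
              (i - 1).choose 2 * lineCount M i : ℕ) : ℤ) := by
      rw [hco2]
      linarith [hch]
    exact real_side hmon hdeg hr2 hreal heval hcard hc hco1 hcoeff2
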